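/- Let W : ZMod 2 → Y → ℝ≥0 and W' : ZMod 2 → Y' → ℝ≥0 be binary-input discrete memoryless channels with finite output alphabets. If W is degraded with respect to W', then the plus-polarized channel W⁺ is degraded with respect to W'⁺, where W⁺ : ZMod 2 → (Y × Y × ZMod 2) → ℝ≥0 is defined by W⁺(u₂)(y₁, y₂, u₁) = (1/2) · W(u₁ + u₂)(y₁) · W(u₂)(y₂). -/
import Mathlib


open Finset

/-- A binary-input discrete memoryless channel: the outputs sum to 1 for each input. -/
def IsBDMC {Y : Type*} [Fintype Y] (W : ZMod 2 → Y → NNReal) : Prop :=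
  ∀ u : ZMod 2, ∑ y, W u y = 1

/-- `W` is degraded with respect to `W'`. -/
def Degraded {Y Y' : Type*} [Fintype Y] [Fintype Y'] (W : ZMod 2 → Y → NNReal)
    (W' : ZMod 2 → Y' → NNReal) : Prop :=
  ∃ P : Y' → Y → NNReal, (∀ y', ∑ y, P y' y = 1) ∧
    ∀ (u : ZMod 2) (y : Y), W u y = ∑ y', W' u y' * P y' y

/-- The plus-polarized channel `W⁺`: `W⁺(u₂)(y₁, y₂, u₁) = (1/2)·W(u₁+u₂)(y₁)·W(u₂)(y₂)`. -/
noncomputable def plusChannel {Y : Type*} [Fintype Y] (W : ZMod 2 → Y → NNReal) :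
    ZMod 2 → Y × Y × ZMod 2 → NNReal :=
  fun u₂ o => (1 / 2 : NNReal) * W (o.2.2 + u₂) o.1 * W u₂ o.2.1

theorem plus_degraded_of_degraded {Y Y' : Type*} [Fintype Y] [Fintype Y']
    (W : ZMod 2 → Y → NNReal) (W' : ZMod 2 → Y' → NNReal)
    (hW : IsBDMC W) (hW' : IsBDMC W') (h : Degraded W W') :
    Degraded (plusChannel W) (plusChannel W') := by
  obtain ⟨P, hP1, hPW⟩ := h
  refine ⟨fun o' o => P o'.1 o.1 * P o'.2.1 o.2.1 * (if o.2.2 = o'.2.2 then 1 else 0),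
    ?_, ?_⟩
  · rintro ⟨y₁', y₂', u₁'⟩
    simp only [Fintype.sum_prod_type, mul_ite, mul_one, mul_zero, Finset.sum_ite_eq',
      Finset.mem_univ, if_true, ← Finset.sum_mul, ← Finset.mul_sum, hP1, one_mul, mul_one]
  · rintro u₂ ⟨y₁, y₂, u₁⟩
    simp only [Fintype.sum_prod_type, mul_ite, mul_one, mul_zero, Finset.sum_ite_eq,
      Finset.mem_univ, if_true]
    simp only [plusChannel]
    have : (1 / 2 : NNReal) * W (u₁ + u₂) y₁ * W u₂ y₂ =
        (1 / 2 : NNReal) * ((∑ y₁', W' (u₁ + u₂) y₁' * P y₁' y₁) *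
          (∑ y₂', W' u₂ y₂' * P y₂' y₂)) := by
      rw [← hPW, ← hPW]; ring
    rw [this, Finset.sum_mul_sum, Finset.mul_sum]
    refine Finset.sum_congr rfl fun y₁' _ => ?_
    rw [Finset.mul_sum]
    refine Finset.sum_congr rfl fun y₂' _ => ?_
    ring
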